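/- For any three pairwise disjoint nonempty finite clusters A, B, C ⊆ ℝ^k, Ward's linkage satisfies the Lance–Williams update formula: d_Ward(A ∪ B, C) = ((|A|+|C|)/(|A|+|B|+|C|))·d_Ward(A, C) + ((|B|+|C|)/(|A|+|B|+|C|))·d_Ward(B, C) - (|C|/(|A|+|B|+|C|))·d_Ward(A, B). -/

import Mathlib

open scoped Classical

noncomputable def centroid {k : ℕ} (A : Finset (EuclideanSpace ℝ (Fin k))) :
    EuclideanSpace ℝ (Fin k) :=
  (A.card : ℝ)⁻¹ • ∑ a ∈ A, a

noncomputable def kMeansCost {k : ℕ} (X : Finset (EuclideanSpace ℝ (Fin k))) : ℝ :=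
  ∑ x ∈ X, ‖x - centroid X‖ ^ 2

noncomputable def dWard {k : ℕ} (A B : Finset (EuclideanSpace ℝ (Fin k))) : ℝ :=
  kMeansCost (A ∪ B) - kMeansCost A - kMeansCost B

lemma kMeansCost_eq {k : ℕ} (X : Finset (EuclideanSpace ℝ (Fin k))) (hX : X.Nonempty) :
    kMeansCost X = (∑ x ∈ X, ‖x‖ ^ 2) - ‖∑ x ∈ X, x‖ ^ 2 / X.card := by
  have hn : (X.card : ℝ) ≠ 0 := Nat.cast_ne_zero.mpr (Finset.card_ne_zero.mpr hX)
  set S := ∑ x ∈ X, x with hS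
  set c := centroid X with hc
  have hsum : ∑ x ∈ X, ‖x - c‖ ^ 2
      = ∑ x ∈ X, (‖x‖ ^ 2 - 2 * inner ℝ x c + ‖c‖ ^ 2) := by
    refine Finset.sum_congr rfl fun x _ => ?_
    exact norm_sub_sq_real x c
  have hic : (inner ℝ S c : ℝ) = (X.card : ℝ)⁻¹ * ‖S‖ ^ 2 := by
    rw [hc, centroid, real_inner_smul_right, real_inner_self_eq_norm_sq]
  have hnc : ‖c‖ ^ 2 = (X.card : ℝ)⁻¹ ^ 2 * ‖S‖ ^ 2 := by
    rw [hc, centroid, norm_smul, mul_pow, Real.norm_eq_abs, sq_abs]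
  rw [kMeansCost, hsum]
  rw [Finset.sum_add_distrib, Finset.sum_sub_distrib, Finset.sum_const,
    ← Finset.mul_sum, ← sum_inner, ← hS, hic, hnc, nsmul_eq_mul]
  field_simp
  ring

lemma dWard_eq {k : ℕ} (A B : Finset (EuclideanSpace ℝ (Fin k)))
    (hA : A.Nonempty) (hB : B.Nonempty) (hAB : Disjoint A B) :
    dWard A B = ‖∑ a ∈ A, a‖ ^ 2 / A.card + ‖∑ b ∈ B, b‖ ^ 2 / B.card
      - ‖(∑ a ∈ A, a) + ∑ b ∈ B, b‖ ^ 2 / (A.card + B.card : ℝ) := by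
  rw [dWard, kMeansCost_eq A hA, kMeansCost_eq B hB,
    kMeansCost_eq (A ∪ B) (hA.mono Finset.subset_union_left),
    Finset.sum_union hAB, Finset.sum_union hAB, Finset.card_union_of_disjoint hAB]
  push_cast
  ring

theorem ward_lance_williams {k : ℕ} (A B C : Finset (EuclideanSpace ℝ (Fin k)))
    (hA : A.Nonempty) (hB : B.Nonempty) (hC : C.Nonempty)
    (hAB : Disjoint A B) (hAC : Disjoint A C) (hBC : Disjoint B C) :
    dWard (A ∪ B) C =
      (((A.card : ℝ) + C.card) / (A.card + B.card + C.card)) * dWard A C +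
      (((B.card : ℝ) + C.card) / (A.card + B.card + C.card)) * dWard B C -
      ((C.card : ℝ) / (A.card + B.card + C.card)) * dWard A B := by
  have hABC : Disjoint (A ∪ B) C := Finset.disjoint_union_left.mpr ⟨hAC, hBC⟩
  have hn : (0:ℝ) < A.card := by exact_mod_cast Finset.card_pos.mpr hA
  have hm : (0:ℝ) < B.card := by exact_mod_cast Finset.card_pos.mpr hB
  have hp : (0:ℝ) < C.card := by exact_mod_cast Finset.card_pos.mpr hC
  rw [dWard_eq (A ∪ B) C (hA.mono Finset.subset_union_left) hC hABC,
    dWard_eq A C hA hC hAC, dWard_eq B C hB hC hBC, dWard_eq A B hA hB hAB,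
    Finset.sum_union hAB, Finset.card_union_of_disjoint hAB]
  set x := ∑ a ∈ A, a
  set y := ∑ b ∈ B, b
  set z := ∑ c ∈ C, c
  have e1 : ∀ u v : EuclideanSpace ℝ (Fin k),
      ‖u + v‖ ^ 2 = ‖u‖ ^ 2 + 2 * inner ℝ u v + ‖v‖ ^ 2 := fun u v => norm_add_sq_real u v
  have e2 : ‖x + y + z‖ ^ 2 = ‖x‖ ^ 2 + ‖y‖ ^ 2 + ‖z‖ ^ 2
      + 2 * inner ℝ x y + 2 * (inner ℝ x z : ℝ) + 2 * (inner ℝ y z : ℝ) := by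
    rw [e1 (x + y) z, e1 x y, inner_add_left]
    ring
  rw [e2, e1 x y, e1 x z, e1 y z]
  push_cast
  field_simp
  ring
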